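/- Let F and G be cumulative distribution functions on ℝ. If G^{-1}(0) = −∞ (i.e., G has unbounded support from below) and F ≤_ss G, then F = G. -/
import Mathlib


open MeasureTheory Set Filter

noncomputable section

/-- A cumulative distribution function on `ℝ`. -/
structure IsCDF (F : ℝ → ℝ) : Prop where
  mono : Monotone F
  right_cont : ∀ x, ContinuousWithinAt F (Set.Ici x) x
  tendsto_atBot : Filter.Tendsto F Filter.atBot (nhds 0)
  tendsto_atTop : Filter.Tendsto F Filter.atTop (nhds 1)

/-- Stochastic order `F ≤_st G`, i.e. `G(x) ≤ F(x)` for all `x`. -/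
def StOrder (F G : ℝ → ℝ) : Prop := ∀ x, G x ≤ F x

/-- The essential infimum of a distribution, `G^{-1}(0) = inf {t | G t > 0}`,
as an extended real (possibly `⊥`). -/
def leftEnd (F : ℝ → ℝ) : EReal :=
  sInf ((fun t : ℝ => (t : EReal)) '' {t : ℝ | 0 < F t})

/-- Strong stochastic order `F ≤_ss G`:
`G(y) − G(x) ≥ F(y) − F(x)` for all `y ≥ x ≥ G^{-1}(0)`. -/
def SSOrder (F G : ℝ → ℝ) : Prop :=
  ∀ x y : ℝ, leftEnd G ≤ (x : EReal) → x ≤ y → F y - F x ≤ G y - G x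

/-- If `G` has support unbounded from below, then `F ≤_ss G` forces `F = G`. -/
theorem ssOrder_eq_of_leftEnd_bot (F G : ℝ → ℝ) (hF : IsCDF F) (hG : IsCDF G)
    (h0 : leftEnd G = ⊥) (h : SSOrder F G) : F = G := by
  have h' : ∀ x y : ℝ, x ≤ y → F y - F x ≤ G y - G x := fun x y hxy =>
    h x y (by rw [h0]; exact bot_le) hxy
  funext a
  have hle : F a ≤ G a := by
    have hlim : Tendsto (fun x => F x - G x) atBot (nhds 0) := by
      simpa using hF.tendsto_atBot.sub hG.tendsto_atBot
    have hev : ∀ᶠ x in atBot, F a - G a ≤ F x - G x := by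
      filter_upwards [eventually_le_atBot a] with x hx
      linarith [h' x a hx]
    linarith [ge_of_tendsto hlim hev]
  have hge : G a ≤ F a := by
    have hlim : Tendsto (fun y => F y - G y) atTop (nhds 0) := by
      simpa using hF.tendsto_atTop.sub hG.tendsto_atTop
    have hev : ∀ᶠ y in atTop, F y - G y ≤ F a - G a := by
      filter_upwards [eventually_ge_atTop a] with y hy
      linarith [h' a y hy]
    linarith [le_of_tendsto hlim hev]
  linarith
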